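/- If 0 < ρ_S < 1, 0 ≤ ρ_G < 1 and α > 0, then the powers of the buffer-occupancy Markov chain converge to its stationary distribution: for every pair of states i, j ∈ {0,…,L}, the sequence n ↦ (M^n)(i,j) converges to π(j) as n → ∞. -/

import Mathlib

/-- The buffer-occupancy Markov chain transition matrix on states `{0,…,L}`. -/
noncomputable def Mmat (L : ℕ) (ρS ρG α : ℝ) :
    Matrix (Fin (L + 1)) (Fin (L + 1)) ℝ :=
  Matrix.of fun i j =>
    if i.val = 0 then
      -- empty buffer
      if j.val = 0 then ρS else if j.val = 1 then 1 - ρS else 0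
    else if i.val = L then
      -- full buffer
      if j.val + 1 = L then α * (1 - ρG) / (1 + α)
      else if j.val = L then (1 + α * ρG) / (1 + α)
      else 0
    else
      -- interior states
      if j.val + 1 = i.val then α * (1 - ρG) / (1 + α)
      else if j.val = i.val then (ρS + α * ρG) / (1 + α)
      else if j.val = i.val + 1 then (1 - ρS) / (1 + α)
      else 0

/-- The candidate stationary distribution `π` of the buffer-occupancy Markov chain. -/
noncomputable def piv (L : ℕ) (ρS ρG α : ℝ) : ℕ → ℝ := fun i =>
  let p : ℝ := (1 - ρS) / (1 + α)
  let q : ℝ := α * (1 - ρG) / (1 + α)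
  let π0 : ℝ := 1 / (1 + (1 - ρS) * ∑ k ∈ Finset.Icc 1 L, p ^ (k - 1) / q ^ k)
  if i = 0 then π0 else p ^ (i - 1) / q ^ i * (1 - ρS) * π0

open Finset Matrix Filter

-- helper sums
lemma sum_two {n : ℕ} (f : Fin n → ℝ) (a b : Fin n) (hab : a ≠ b)
    (h0 : ∀ j, j ≠ a → j ≠ b → f j = 0) : ∑ j, f j = f a + f b := by
  rw [← Finset.sum_subset (Finset.subset_univ ({a, b} : Finset (Fin n)))]
  · rw [Finset.sum_insert (by simpa using hab), Finset.sum_singleton]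
  · intro x _ hx
    simp only [Finset.mem_insert, Finset.mem_singleton, not_or] at hx
    exact h0 x hx.1 hx.2

lemma sum_three {n : ℕ} (f : Fin n → ℝ) (a b c : Fin n)
    (hab : a ≠ b) (hac : a ≠ c) (hbc : b ≠ c)
    (h0 : ∀ j, j ≠ a → j ≠ b → j ≠ c → f j = 0) : ∑ j, f j = f a + f b + f c := by
  rw [← Finset.sum_subset (Finset.subset_univ ({a, b, c} : Finset (Fin n)))]
  · rw [Finset.sum_insert (by simp [hab, hac]), Finset.sum_insert (by simpa using hbc),
      Finset.sum_singleton, add_assoc]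
  · intro x _ hx
    simp only [Finset.mem_insert, Finset.mem_singleton, not_or] at hx
    exact h0 x hx.1 hx.2.1 hx.2.2

-- entry lemmas
lemma Mmat_eq_zero {L : ℕ} {ρS ρG α : ℝ} (i j : Fin (L+1))
    (h : j.val + 1 < i.val ∨ i.val + 1 < j.val) : Mmat L ρS ρG α i j = 0 := by
  have hi := i.isLt; have hj := j.isLt
  simp only [Mmat, Matrix.of_apply]
  split_ifs <;> first | rfl | omega

lemma Mmat_down {L : ℕ} {ρS ρG α : ℝ} (i j : Fin (L+1)) (h : j.val + 1 = i.val) :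
    Mmat L ρS ρG α i j = α * (1 - ρG) / (1 + α) := by
  have hi := i.isLt
  simp only [Mmat, Matrix.of_apply]
  split_ifs <;> first | rfl | omega

lemma Mmat_up {L : ℕ} {ρS ρG α : ℝ} (i j : Fin (L+1)) (h : i.val + 1 = j.val) :
    Mmat L ρS ρG α i j = if i.val = 0 then 1 - ρS else (1 - ρS) / (1 + α) := by
  have hj := j.isLt
  simp only [Mmat, Matrix.of_apply]
  split_ifs <;> first | rfl | omega

lemma Mmat_diag {L : ℕ} {ρS ρG α : ℝ} (i : Fin (L+1)) :
    Mmat L ρS ρG α i i = if i.val = 0 then ρS else if i.val = L then (1 + α * ρG) / (1 + α)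
      else (ρS + α * ρG) / (1 + α) := by
  have hi := i.isLt
  simp only [Mmat, Matrix.of_apply]
  split_ifs <;> first | rfl | omega

lemma Mmat_nonneg {L : ℕ} {ρS ρG α : ℝ} (hS0 : 0 ≤ ρS) (hS1 : ρS ≤ 1)
    (hG0 : 0 ≤ ρG) (hG1 : ρG ≤ 1) (hα : 0 < α) (i j : Fin (L+1)) :
    0 ≤ Mmat L ρS ρG α i j := by
  have h1 : (0:ℝ) < 1 + α := by linarith
  simp only [Mmat, Matrix.of_apply]
  split_ifs <;> first | linarith | (apply div_nonneg _ h1.le; nlinarith)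

lemma Mmat_rowsum {L : ℕ} {ρS ρG α : ℝ} (hL : 1 ≤ L) (hα : 0 < α) (i : Fin (L+1)) :
    ∑ j, Mmat L ρS ρG α i j = 1 := by
  have h1 : (0:ℝ) < 1 + α := by linarith
  have h1' : (1:ℝ) + α ≠ 0 := ne_of_gt h1
  have hi := i.isLt
  rcases eq_or_ne i.val 0 with h0 | h0
  · rw [sum_two _ i (⟨1, by omega⟩ : Fin (L+1))
      (Fin.ne_of_val_ne (show i.val ≠ 1 by omega)) (fun j hj1 hj2 => by
        rw [Fin.ne_iff_vne] at hj1 hj2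
        have hj2' : j.val ≠ 1 := hj2
        exact Mmat_eq_zero i j (by omega))]
    rw [Mmat_diag i, Mmat_up i _ (show i.val + 1 = 1 by omega)]
    rw [if_pos h0, if_pos h0]; ring
  · rcases eq_or_ne i.val L with hLv | hLv
    · rw [sum_two _ (⟨L-1, by omega⟩ : Fin (L+1)) i
        (Fin.ne_of_val_ne (show L-1 ≠ i.val by omega)) (fun j hj1 hj2 => by
          rw [Fin.ne_iff_vne] at hj1 hj2
          have hj1' : j.val ≠ L-1 := hj1
          exact Mmat_eq_zero i j (by omega))]
      rw [Mmat_down i _ (show (L-1) + 1 = i.val by omega), Mmat_diag i]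
      rw [if_neg h0, if_pos hLv]
      field_simp
      ring
    · rw [sum_three _ (⟨i.val-1, by omega⟩ : Fin (L+1)) i (⟨i.val+1, by omega⟩ : Fin (L+1))
        (Fin.ne_of_val_ne (show i.val-1 ≠ i.val by omega))
        (Fin.ne_of_val_ne (show i.val-1 ≠ i.val+1 by omega))
        (Fin.ne_of_val_ne (show i.val ≠ i.val+1 by omega)) (fun j hj1 hj2 hj3 => by
          rw [Fin.ne_iff_vne] at hj1 hj2 hj3
          have hj1' : j.val ≠ i.val-1 := hj1
          have hj3' : j.val ≠ i.val+1 := hj3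
          exact Mmat_eq_zero i j (by omega))]
      rw [Mmat_down i _ (show (i.val-1) + 1 = i.val by omega), Mmat_diag i,
        Mmat_up i _ rfl]
      rw [if_neg h0, if_neg hLv, if_neg h0]
      field_simp
      ring

lemma den_pos {L : ℕ} {ρS ρG α : ℝ} (hS1 : ρS ≤ 1) (hG1 : ρG ≤ 1) (hα : 0 ≤ α) :
    0 < 1 + (1 - ρS) * ∑ k ∈ Finset.Icc 1 L,
      ((1 - ρS)/(1+α)) ^ (k - 1) / (α * (1 - ρG)/(1+α)) ^ k := by
  have h1 : (0:ℝ) ≤ 1 + α := by linarith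
  have hs : 0 ≤ ∑ k ∈ Finset.Icc 1 L, ((1 - ρS)/(1+α)) ^ (k - 1) / (α * (1 - ρG)/(1+α)) ^ k := by
    apply Finset.sum_nonneg
    intro k _
    exact div_nonneg (pow_nonneg (div_nonneg (by linarith) h1) _)
      (pow_nonneg (div_nonneg (by nlinarith) h1) _)
  nlinarith

lemma piv_pos {L : ℕ} {ρS ρG α : ℝ} (hS1 : ρS < 1) (hG1 : ρG < 1) (hα : 0 < α) (k : ℕ) :
    0 < piv L ρS ρG α k := by
  have h1 : (0:ℝ) < 1 + α := by linarith
  have hp : (0:ℝ) < (1 - ρS)/(1+α) := div_pos (by linarith) h1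
  have hq : (0:ℝ) < α * (1 - ρG)/(1+α) := div_pos (by nlinarith) h1
  have hd := den_pos (L := L) (ρS := ρS) (ρG := ρG) (α := α) hS1.le hG1.le hα.le
  simp only [piv]
  split_ifs
  · exact one_div_pos.2 hd
  · exact mul_pos (mul_pos (div_pos (pow_pos hp _) (pow_pos hq _)) (by linarith))
      (one_div_pos.2 hd)

lemma piv_zero_eq {L : ℕ} {ρS ρG α : ℝ} : piv L ρS ρG α 0 =
    1 / (1 + (1-ρS) * ∑ k ∈ Finset.Icc 1 L, ((1-ρS)/(1+α))^(k-1)/(α*(1-ρG)/(1+α))^k) := by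
  simp [piv]

lemma piv_succ_eq {L : ℕ} {ρS ρG α : ℝ} (i : ℕ) : piv L ρS ρG α (i+1) =
    ((1-ρS)/(1+α))^i / (α*(1-ρG)/(1+α))^(i+1) * (1-ρS) * piv L ρS ρG α 0 := by
  simp [piv]

lemma piv_sum {L : ℕ} {ρS ρG α : ℝ} (hL : 1 ≤ L) (hS1 : ρS < 1) (hG1 : ρG < 1) (hα : 0 < α) :
    ∑ j : Fin (L+1), piv L ρS ρG α j.val = 1 := by
  have hd := den_pos (L := L) (ρS := ρS) (ρG := ρG) (α := α) hS1.le hG1.le hα.le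
  rw [Fin.sum_univ_eq_sum_range, Finset.sum_range_succ']
  have h3 : ∑ k ∈ Finset.Icc 1 L, ((1-ρS)/(1+α)) ^ (k-1) / (α*(1-ρG)/(1+α)) ^ k
      = ∑ i ∈ Finset.range L, ((1-ρS)/(1+α)) ^ i / (α*(1-ρG)/(1+α)) ^ (i+1) := by
    rw [← Finset.Ico_add_one_right_eq_Icc, Finset.sum_Ico_eq_sum_range]
    simp only [Nat.add_sub_cancel, Nat.add_sub_cancel_left]
    exact Finset.sum_congr rfl fun i _ => by rw [Nat.add_comm 1 i]
  have h2 : ∑ i ∈ Finset.range L, piv L ρS ρG α (i+1)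
      = (∑ i ∈ Finset.range L, ((1-ρS)/(1+α)) ^ i / (α*(1-ρG)/(1+α)) ^ (i+1)) *
        ((1-ρS) * piv L ρS ρG α 0) := by
    rw [Finset.sum_mul]
    exact Finset.sum_congr rfl fun i _ => by rw [piv_succ_eq]; ring
  rw [h2, ← h3, piv_zero_eq]
  set S := ∑ k ∈ Finset.Icc 1 L, ((1-ρS)/(1+α))^(k-1)/(α*(1-ρG)/(1+α))^k with hSdef
  have hd' : (1 + (1-ρS) * S) ≠ 0 := ne_of_gt hd
  field_simp
  have hX : (1 + S * (1 - ρS)) ≠ 0 := by intro h; apply hd'; linarith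
  rw [div_eq_one_iff_eq hX]
  ring

lemma piv_up {L : ℕ} {ρS ρG α : ℝ} (hS1 : ρS < 1) (hG1 : ρG < 1) (hα : 0 < α) (k : ℕ) :
    piv L ρS ρG α k * (if k = 0 then 1 - ρS else (1-ρS)/(1+α)) =
    piv L ρS ρG α (k+1) * (α*(1-ρG)/(1+α)) := by
  have h1 : (0:ℝ) < 1+α := by linarith
  have h1' : (1:ℝ) + α ≠ 0 := ne_of_gt h1
  have ha0 : α ≠ 0 := ne_of_gt hα
  have hg : (1:ℝ) - ρG ≠ 0 := by linarith
  rcases k with _ | m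
  · rw [if_pos rfl, piv_succ_eq, pow_zero, pow_one]
    field_simp
  · rw [if_neg (Nat.succ_ne_zero m), piv_succ_eq, piv_succ_eq]
    field_simp
    ring

lemma piv_DB {L : ℕ} {ρS ρG α : ℝ} (hS1 : ρS < 1) (hG1 : ρG < 1) (hα : 0 < α)
    (i j : Fin (L+1)) :
    piv L ρS ρG α i.val * Mmat L ρS ρG α i j = piv L ρS ρG α j.val * Mmat L ρS ρG α j i := by
  rcases eq_or_ne i j with rfl | hij
  · rfl
  rcases eq_or_ne (i.val + 1) j.val with hup | hup
  · rw [Mmat_up i j hup, Mmat_down j i hup]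
    have h := piv_up (L := L) hS1 hG1 hα i.val
    rw [show i.val + 1 = j.val from hup] at h
    exact h
  rcases eq_or_ne (j.val + 1) i.val with hdn | hdn
  · rw [Mmat_down i j hdn, Mmat_up j i hdn]
    have h := piv_up (L := L) hS1 hG1 hα j.val
    rw [show j.val + 1 = i.val from hdn] at h
    exact h.symm
  · rw [Fin.ne_iff_vne] at hij
    rw [Mmat_eq_zero i j (by omega), Mmat_eq_zero j i (by omega), mul_zero, mul_zero]

lemma piv_stat {L : ℕ} {ρS ρG α : ℝ} (hL : 1 ≤ L) (hS1 : ρS < 1) (hG1 : ρG < 1)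
    (hα : 0 < α) (j : Fin (L+1)) :
    ∑ i, piv L ρS ρG α i.val * Mmat L ρS ρG α i j = piv L ρS ρG α j.val := by
  calc ∑ i, piv L ρS ρG α i.val * Mmat L ρS ρG α i j
      = ∑ i, piv L ρS ρG α j.val * Mmat L ρS ρG α j i :=
        Finset.sum_congr rfl fun i _ => piv_DB hS1 hG1 hα i j
    _ = piv L ρS ρG α j.val * ∑ i, Mmat L ρS ρG α j i := by rw [Finset.mul_sum]
    _ = piv L ρS ρG α j.val := by rw [Mmat_rowsum hL hα, mul_one]

lemma pow_entry_nonneg {L : ℕ} {ρS ρG α : ℝ} (hS0 : 0 ≤ ρS) (hS1 : ρS ≤ 1)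
    (hG0 : 0 ≤ ρG) (hG1 : ρG ≤ 1) (hα : 0 < α) (n : ℕ) (i j : Fin (L+1)) :
    0 ≤ (Mmat L ρS ρG α ^ n) i j := by
  induction n generalizing i j with
  | zero =>
    rw [pow_zero]
    rcases eq_or_ne i j with rfl | hij
    · simp [Matrix.one_apply_eq]
    · simp [Matrix.one_apply_ne hij]
  | succ n ih =>
    rw [pow_succ, Matrix.mul_apply]
    exact Finset.sum_nonneg fun k _ => mul_nonneg (ih i k) (Mmat_nonneg hS0 hS1 hG0 hG1 hα k j)

lemma pow_rowsum {L : ℕ} {ρS ρG α : ℝ} (hL : 1 ≤ L) (hα : 0 < α) (n : ℕ) (i : Fin (L+1)) :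
    ∑ j, (Mmat L ρS ρG α ^ n) i j = 1 := by
  induction n generalizing i with
  | zero =>
    rw [pow_zero]
    simp [Matrix.one_apply]
  | succ n ih =>
    rw [pow_succ]
    simp only [Matrix.mul_apply]
    rw [Finset.sum_comm]
    calc ∑ k, ∑ j, (Mmat L ρS ρG α ^ n) i k * Mmat L ρS ρG α k j
        = ∑ k, (Mmat L ρS ρG α ^ n) i k * ∑ j, Mmat L ρS ρG α k j := by
          simp [Finset.mul_sum]
      _ = ∑ k, (Mmat L ρS ρG α ^ n) i k := by
          simp only [Mmat_rowsum hL hα, mul_one]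
      _ = 1 := ih i

lemma piv_stat_pow {L : ℕ} {ρS ρG α : ℝ} (hL : 1 ≤ L) (hS1 : ρS < 1) (hG1 : ρG < 1)
    (hα : 0 < α) (n : ℕ) (j : Fin (L+1)) :
    ∑ i, piv L ρS ρG α i.val * (Mmat L ρS ρG α ^ n) i j = piv L ρS ρG α j.val := by
  induction n generalizing j with
  | zero =>
    rw [pow_zero]
    rw [Finset.sum_eq_single j]
    · simp [Matrix.one_apply_eq]
    · intro b _ hb
      simp [Matrix.one_apply_ne hb]
    · intro h; exact absurd (Finset.mem_univ j) h
  | succ n ih =>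
    rw [pow_succ]
    simp only [Matrix.mul_apply, Finset.mul_sum]
    rw [Finset.sum_comm]
    calc ∑ k, ∑ i, piv L ρS ρG α i.val * ((Mmat L ρS ρG α ^ n) i k * Mmat L ρS ρG α k j)
        = ∑ k, (∑ i, piv L ρS ρG α i.val * (Mmat L ρS ρG α ^ n) i k) * Mmat L ρS ρG α k j := by
          refine Finset.sum_congr rfl fun k _ => ?_
          rw [Finset.sum_mul]
          exact Finset.sum_congr rfl fun i _ => by ring
      _ = ∑ k, piv L ρS ρG α k.val * Mmat L ρS ρG α k j := by
          simp only [ih]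
      _ = piv L ρS ρG α j.val := piv_stat hL hS1 hG1 hα j

lemma pow_entry_pos {L : ℕ} {ρS ρG α : ℝ} (hL : 1 ≤ L) (hS0 : 0 < ρS) (hS1 : ρS < 1)
    (hG0 : 0 ≤ ρG) (hG1 : ρG < 1) (hα : 0 < α) :
    ∀ n (i j : Fin (L+1)), j.val ≤ i.val + n → i.val ≤ j.val + n →
      0 < (Mmat L ρS ρG α ^ n) i j := by
  have h1 : (0:ℝ) < 1 + α := by linarith
  have hp : (0:ℝ) < (1 - ρS)/(1+α) := div_pos (by linarith) h1
  have hq : (0:ℝ) < α * (1 - ρG)/(1+α) := div_pos (by nlinarith) h1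
  intro n
  induction n with
  | zero =>
    intro i j hij1 hij2
    have : i = j := Fin.ext (by omega)
    subst this
    simp [pow_zero, Matrix.one_apply_eq]
  | succ n ih =>
    intro i j hij1 hij2
    have hi := i.isLt
    have hj := j.isLt
    rw [pow_succ', Matrix.mul_apply]
    -- choose intermediate state k0
    rcases lt_trichotomy i.val j.val with hlt | heq | hgt
    · refine Finset.sum_pos' (fun k _ => mul_nonneg (Mmat_nonneg hS0.le hS1.le hG0 hG1.le hα i k)
        (pow_entry_nonneg hS0.le hS1.le hG0 hG1.le hα n k j)) ⟨⟨i.val+1, by omega⟩, Finset.mem_univ _, ?_⟩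
      apply mul_pos
      · rw [Mmat_up i _ rfl]
        split_ifs
        · linarith
        · exact hp
      · exact ih _ j (show j.val ≤ (i.val+1) + n by omega) (show i.val+1 ≤ j.val + n by omega)
    · refine Finset.sum_pos' (fun k _ => mul_nonneg (Mmat_nonneg hS0.le hS1.le hG0 hG1.le hα i k)
        (pow_entry_nonneg hS0.le hS1.le hG0 hG1.le hα n k j)) ⟨i, Finset.mem_univ _, ?_⟩
      apply mul_pos
      · rw [Mmat_diag i]
        split_ifs
        · exact hS0
        · exact div_pos (by nlinarith) h1
        · exact div_pos (by nlinarith) h1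
      · exact ih i j (by omega) (by omega)
    · refine Finset.sum_pos' (fun k _ => mul_nonneg (Mmat_nonneg hS0.le hS1.le hG0 hG1.le hα i k)
        (pow_entry_nonneg hS0.le hS1.le hG0 hG1.le hα n k j)) ⟨⟨i.val-1, by omega⟩, Finset.mem_univ _, ?_⟩
      apply mul_pos
      · rw [Mmat_down i _ (show i.val - 1 + 1 = i.val by omega)]
        exact hq
      · exact ih _ j (show j.val ≤ (i.val-1) + n by omega) (show i.val-1 ≤ j.val + n by omega)

lemma contraction {N : ℕ} (A : Matrix (Fin N) (Fin N) ℝ) (ε : ℝ) (hε : ∀ i j, ε ≤ A i j)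
    (hrow : ∀ i, ∑ j, A i j = 1) (v : Fin N → ℝ) (hv : ∑ i, v i = 0) :
    ∑ j, |∑ i, v i * A i j| ≤ (1 - N * ε) * ∑ i, |v i| := by
  have key : ∀ j, |∑ i, v i * A i j| ≤ ∑ i, |v i| * (A i j - ε) := by
    intro j
    have h1 : ∑ i, v i * A i j = ∑ i, v i * (A i j - ε) := by
      have h2 : ∑ i, v i * (A i j - ε) = ∑ i, v i * A i j - (∑ i, v i) * ε := by
        rw [Finset.sum_mul, ← Finset.sum_sub_distrib]
        exact Finset.sum_congr rfl fun i _ => by ring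
      rw [h2, hv, zero_mul, sub_zero]
    rw [h1]
    refine (Finset.abs_sum_le_sum_abs _ _).trans ?_
    refine Finset.sum_le_sum fun i _ => ?_
    rw [abs_mul, abs_of_nonneg (sub_nonneg.2 (hε i j))]
  calc ∑ j, |∑ i, v i * A i j| ≤ ∑ j, ∑ i, |v i| * (A i j - ε) :=
        Finset.sum_le_sum fun j _ => key j
    _ = ∑ i, |v i| * ((∑ j, A i j) - N * ε) := by
        rw [Finset.sum_comm]
        refine Finset.sum_congr rfl fun i _ => ?_
        rw [← Finset.mul_sum, Finset.sum_sub_distrib, Finset.sum_const, Finset.card_univ,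
          Fintype.card_fin, nsmul_eq_mul]
    _ = ∑ i, |v i| * (1 - N * ε) := by simp only [hrow]
    _ = (1 - N * ε) * ∑ i, |v i| := by rw [← Finset.sum_mul]; ring

/-- if `0 < ρS < 1`, `0 ≤ ρG < 1`, `α > 0`, the powers of the
buffer-occupancy chain converge entrywise to the stationary distribution `π`. -/
theorem stmt9 (L : ℕ) (hL : 1 ≤ L) (ρS ρG α : ℝ)
    (hS0 : 0 < ρS) (hS1 : ρS < 1) (hG0 : 0 ≤ ρG) (hG1 : ρG < 1) (hα : 0 < α) :
    ∀ i j : Fin (L + 1),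
      Filter.Tendsto (fun n : ℕ => (Mmat L ρS ρG α ^ n) i j) Filter.atTop
        (nhds (piv L ρS ρG α j.val)) := by

  intro i j
  set M := Mmat L ρS ρG α with hM
  obtain ⟨⟨a, b⟩, -, hmin⟩ := Finset.exists_min_image
    (Finset.univ : Finset (Fin (L+1) × Fin (L+1)))
    (fun x => (M ^ L) x.1 x.2) Finset.univ_nonempty
  set ε := (M ^ L) a b with hεdef
  have hεpos : 0 < ε := pow_entry_pos hL hS0 hS1 hG0 hG1 hα L a b
    (by have := b.isLt; omega) (by have := a.isLt; omega)
  have hεle : ∀ i' j', ε ≤ (M ^ L) i' j' := fun i' j' => hmin (i', j') (Finset.mem_univ _)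
  set c : ℝ := 1 - ((L+1 : ℕ) : ℝ) * ε with hcdef
  have hcastpos : (0:ℝ) < ((L+1 : ℕ) : ℝ) := by positivity
  have hle1 : ((L+1:ℕ):ℝ) * ε ≤ 1 := by
    calc ((L+1:ℕ):ℝ) * ε = ∑ _j' : Fin (L+1), ε := by
          rw [Finset.sum_const, Finset.card_univ, Fintype.card_fin, nsmul_eq_mul]
      _ ≤ ∑ j', (M ^ L) a j' := Finset.sum_le_sum fun j' _ => hεle a j'
      _ = 1 := pow_rowsum hL hα L a
  have hc0 : 0 ≤ c := by rw [hcdef]; linarith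
  have hc1 : c < 1 := by
    rw [hcdef]
    nlinarith
  set f : ℕ → Fin (L+1) → ℝ := fun n k => (M ^ n) i k - piv L ρS ρG α k.val with hf
  set g : ℕ → ℝ := fun n => ∑ k, |f n k| with hg
  have hfsum : ∀ n, ∑ k, f n k = 0 := by
    intro n
    rw [hf]
    rw [Finset.sum_sub_distrib, pow_rowsum hL hα n i, piv_sum hL hS1 hG1 hα]
    ring
  have hstep : ∀ n m (k : Fin (L+1)), f (n + m) k = ∑ l, f n l * (M ^ m) l k := by
    intro n m k
    have hA : (M ^ (n+m)) i k = ∑ l, (M ^ n) i l * (M ^ m) l k := by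
      rw [pow_add, Matrix.mul_apply]
    have hB : piv L ρS ρG α k.val = ∑ l, piv L ρS ρG α l.val * (M ^ m) l k :=
      (piv_stat_pow hL hS1 hG1 hα m k).symm
    rw [hf]
    simp only
    rw [hA, hB, ← Finset.sum_sub_distrib]
    exact Finset.sum_congr rfl fun l _ => by ring
  have key : ∀ n m (ε' : ℝ), (∀ i' j', ε' ≤ (M ^ m) i' j') →
      g (n + m) ≤ (1 - ((L+1:ℕ):ℝ) * ε') * g n := by
    intro n m ε' hε'
    have hcontr := contraction (M ^ m) ε' hε' (pow_rowsum hL hα m) (f n) (hfsum n)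
    rw [hg]
    simp only
    calc ∑ k, |f (n+m) k| = ∑ k, |∑ l, f n l * (M ^ m) l k| :=
          Finset.sum_congr rfl fun k _ => by rw [hstep]
      _ ≤ _ := hcontr
  have mono : ∀ n m, g (n + m) ≤ g n := by
    intro n m
    have h := key n m 0 (fun i' j' => pow_entry_nonneg hS0.le hS1.le hG0 hG1.le hα m i' j')
    simpa using h
  have geom : ∀ m, g (L * m) ≤ c ^ m * g 0 := by
    intro m
    induction m with
    | zero => simp
    | succ m ih =>
      have h2 : g (L * m + L) ≤ c * g (L * m) := key (L*m) L ε hεle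
      calc g (L * (m+1)) = g (L * m + L) := by rw [Nat.mul_succ]
        _ ≤ c * g (L * m) := h2
        _ ≤ c * (c ^ m * g 0) := mul_le_mul_of_nonneg_left ih hc0
        _ = c ^ (m+1) * g 0 := by ring
  have gnonneg : ∀ n, 0 ≤ g n := by
    intro n
    rw [hg]
    show (0:ℝ) ≤ ∑ k, |f n k|
    exact Finset.sum_nonneg fun k _ => abs_nonneg _
  have gbound : ∀ n, g n ≤ c ^ (n / L) * g 0 := by
    intro n
    have h := mono (L * (n / L)) (n % L)
    rw [Nat.div_add_mod n L] at h
    exact h.trans (geom (n / L))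
  have htend : Tendsto (fun n : ℕ => c ^ (n / L) * g 0) atTop (nhds 0) := by
    have h1 : Tendsto (fun m : ℕ => c ^ m) atTop (nhds 0) :=
      tendsto_pow_atTop_nhds_zero_of_lt_one hc0 hc1
    have h2 : Tendsto (fun n : ℕ => n / L) atTop atTop := by
      apply Filter.tendsto_atTop_atTop.2
      intro b
      exact ⟨L * b, fun n hn => (Nat.le_div_iff_mul_le (by omega)).2
        (by rw [Nat.mul_comm]; exact hn)⟩
    have h3 := (h1.comp h2).mul_const (g 0)
    simpa using h3
  have gzero : Tendsto g atTop (nhds 0) := squeeze_zero gnonneg gbound htend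
  have habs : ∀ n, |f n j| ≤ g n := by
    intro n
    rw [hg]
    show |f n j| ≤ ∑ k, |f n k|
    exact Finset.single_le_sum (f := fun k => |f n k|) (fun k _ => abs_nonneg _)
      (Finset.mem_univ j)
  have habs0 : Tendsto (fun n => |f n j|) atTop (nhds 0) :=
    squeeze_zero (fun n => abs_nonneg _) habs gzero
  have hfj : Tendsto (fun n => f n j) atTop (nhds 0) := by
    rw [tendsto_zero_iff_norm_tendsto_zero]
    simpa [Real.norm_eq_abs] using habs0
  have hfinal := hfj.add (tendsto_const_nhds (x := piv L ρS ρG α j.val) (f := atTop))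
  rw [zero_add] at hfinal
  have heq : ∀ n : ℕ, f n j + piv L ρS ρG α j.val = (M ^ n) i j := by
    intro n
    rw [hf]
    ring
  simpa only [heq] using hfinal
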